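/- arXiv:math/0103097 — 2 statements merged into one kernel-verified Lean document; each statement's English description precedes it below -/
import Mathlib

section
/- Let σ be a set of r positive roots of A_r forming a basis of the hyperplane E_r = {a ∈ ℝ^{r+1} : Σ a_i = 0}, and let f_σ := 1/∏_{α∈σ} α be the corresponding simple fraction (each root e^i − e^j with j ≤ r acting as the linear form x_i − x_j, and e^i − e^{r+1} as x_i). If every vector e^k − e^{r+1} (1 ≤ k ≤ r) lies in the cone C(σ) of nonnegative linear combinations of the elements of σ, then Ires_{x=0} f_σ = 1; otherwise Ires_{x=0} f_σ = 0. (Equivalently, the Jeffrey–Kirwan linear form ⟨⟨c^+,·⟩⟩ attached to the nice chamber c^+ = {a : a_1 > 0, …, a_r > 0} coincides with the iterated residue Ires_{x=0} on S_{A_r}.) -/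
/-- The tower of rational function fields `ℚ ⊂ ℚ(x_1) ⊂ ℚ(x_1,x_2) ⊂ ⋯`, bundled with
its field structure. -/
noncomputable def RFpair : ℕ → ((K : Type) × Field K) := fun n =>
  Nat.rec ⟨ℚ, inferInstance⟩
    (fun _ p => letI : Field p.1 := p.2; ⟨RatFunc p.1, inferInstance⟩) n

/-- The field `ℚ(x_1, …, x_n)` of rational functions in `n` variables. -/
abbrev RF (n : ℕ) : Type := (RFpair n).1

noncomputable instance RFfield (n : ℕ) : Field (RF n) := (RFpair n).2

/-- The residue at `x_n = 0`: the coefficient of `x_n⁻¹` in the Laurent expansion at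
`x_n = 0` over the field `ℚ(x_1,…,x_{n-1})`. -/
noncomputable def resRF (n : ℕ) (f : RatFunc (RF n)) : RF n :=
  ((f : LaurentSeries (RF n))).coeff (-1)

/-- The iterated residue `Ires_{x=0} = Res_{x_1=0} Res_{x_2=0} ⋯ Res_{x_n=0}`. -/
noncomputable def Ires : (n : ℕ) → RF n → ℚ
  | 0, f => f
  | n+1, f => Ires n (resRF n f)

/-- The variable `x_i` (1-indexed, `1 ≤ i ≤ n`) as an element of `RF n`; `0` if `i` is out
of range (in particular `x_{n+1} = 0`). -/
noncomputable def Xv : (n : ℕ) → ℕ → RF n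
  | 0, _ => 0
  | n+1, i =>
    if i = n+1 then (RatFunc.X : RatFunc (RF n))
    else ((RatFunc.C (Xv n i) : RatFunc (RF n)) : RF (n+1))

/-- The positive root `e^{p.1} - e^{p.2}` (0-indexed) of `A_r` as a rational vector in
`ℚ^{r+1}`. -/
def rootVQ (r : ℕ) (p : Fin (r+1) × Fin (r+1)) : Fin (r+1) → ℚ :=
  fun k => if k = p.1 then 1 else if k = p.2 then -1 else 0

/-- The linear form on `V` attached to the root `e^{p.1} - e^{p.2}`, namely
`x_{p.1} - x_{p.2}` (1-indexed variables, with the convention `x_{r+1} = 0`). -/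
noncomputable def rootForm (r : ℕ) (p : Fin (r+1) × Fin (r+1)) : RF r :=
  Xv r ((p.1 : ℕ) + 1) - Xv r ((p.2 : ℕ) + 1)

-- part 2
theorem Xv_succ (n i : ℕ) : Xv (n+1) i =
    if i = n+1 then (RatFunc.X : RatFunc (RF n)) else RatFunc.C (Xv n i) := rfl

theorem Ires_succ (n : ℕ) (f : RatFunc (RF n)) : Ires (n+1) f = Ires n (resRF n f) := rfl

theorem Xv_eq_zero (n : ℕ) : ∀ i : ℕ, n < i → Xv n i = 0 := by
  induction n with
  | zero => intro i _; rfl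
  | succ n ih =>
    intro i hi
    rw [Xv_succ, if_neg (by omega), ih i (by omega), map_zero]
    rfl

theorem Xv_ne_zero (n : ℕ) : ∀ i : ℕ, 1 ≤ i → i ≤ n → Xv n i ≠ 0 := by
  induction n with
  | zero => intro i h1 h2; omega
  | succ n ih =>
    intro i h1 h2
    rw [Xv_succ]
    by_cases h : i = n+1
    · rw [if_pos h]; exact RatFunc.X_ne_zero
    · rw [if_neg h]
      exact (map_ne_zero_iff (RatFunc.C : RF n →+* RatFunc (RF n)) (RingHom.injective _)).2 (ih i h1 (by omega))

theorem sub_RF (n : ℕ) (a b : RF (n+1)) :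
    a - b = (a : RatFunc (RF n)) - (b : RatFunc (RF n)) := rfl

def e0 (n : ℕ) : Fin (n+2) × Fin (n+2) := (⟨n, by omega⟩, ⟨n+1, by omega⟩)
def qmap (n : ℕ) (k : Fin (n+2)) : Fin (n+1) := ⟨min k.val n, by omega⟩
def ctr (n : ℕ) (p : Fin (n+2) × Fin (n+2)) : Fin (n+1) × Fin (n+1) := (qmap n p.1, qmap n p.2)

theorem qmap_le (n : ℕ) (k : Fin (n+2)) (h : (k:ℕ) ≤ n) : ((qmap n k : ℕ)) = (k:ℕ) := by
  simp only [qmap]; omega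

theorem qmap_top (n : ℕ) (k : Fin (n+2)) (h : (k:ℕ) = n+1) : ((qmap n k : ℕ)) = n := by
  simp only [qmap]; omega

theorem rootForm_e0 (n : ℕ) : rootForm (n+1) (e0 n) = (RatFunc.X : RatFunc (RF n)) := by
  have h1 : ((e0 n).1 : ℕ) = n := rfl
  have h2 : ((e0 n).2 : ℕ) = n+1 := rfl
  unfold rootForm
  rw [sub_RF, h1, h2, Xv_succ, Xv_succ, if_pos rfl, if_neg (by omega),
    Xv_eq_zero n _ (by omega), map_zero]
  exact sub_zero _

theorem ctr_fst (n : ℕ) (p : Fin (n+2) × Fin (n+2)) : (ctr n p).1 = qmap n p.1 := rfl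
theorem ctr_snd (n : ℕ) (p : Fin (n+2) × Fin (n+2)) : (ctr n p).2 = qmap n p.2 := rfl

theorem rootForm_ctr_T (n : ℕ) (p : Fin (n+2) × Fin (n+2)) (h1 : (p.1:ℕ) < (p.2:ℕ))
    (h2 : (p.2:ℕ) = n) : rootForm n (ctr n p) = Xv n ((p.1:ℕ)+1) := by
  unfold rootForm
  rw [ctr_fst, ctr_snd, qmap_le n p.1 (by omega), qmap_le n p.2 (by omega), h2,
    Xv_eq_zero n (n+1) (by omega), sub_zero]

theorem rootForm_T (n : ℕ) (p : Fin (n+2) × Fin (n+2)) (h1 : (p.1:ℕ) < (p.2:ℕ))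
    (h2 : (p.2:ℕ) = n) :
    rootForm (n+1) p = RatFunc.C (rootForm n (ctr n p)) - RatFunc.X := by
  rw [rootForm_ctr_T n p h1 h2]
  unfold rootForm
  rw [sub_RF, Xv_succ, Xv_succ, if_neg (by omega), if_pos (by omega)]
  rfl

theorem rootForm_T_ne (n : ℕ) (p : Fin (n+2) × Fin (n+2)) (h1 : (p.1:ℕ) < (p.2:ℕ))
    (h2 : (p.2:ℕ) = n) : rootForm n (ctr n p) ≠ 0 := by
  rw [rootForm_ctr_T n p h1 h2]
  exact Xv_ne_zero n _ (by omega) (by omega)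

theorem rootForm_U (n : ℕ) (p : Fin (n+2) × Fin (n+2)) (h1 : (p.1:ℕ) < (p.2:ℕ))
    (hne : p ≠ e0 n) (h2 : (p.2:ℕ) ≠ n) :
    rootForm (n+1) p = RatFunc.C (rootForm n (ctr n p)) := by
  have hp2 : (p.2:ℕ) ≤ n + 1 := by omega
  have hp1n : (p.1:ℕ) ≠ n := by
    intro h
    by_cases hc : (p.2:ℕ) = n+1
    · exact hne (Prod.ext (Fin.ext (by simpa [e0] using h)) (Fin.ext (by simpa [e0] using hc)))
    · omega
  by_cases hc : (p.2:ℕ) = n+1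
  · have key : rootForm n (ctr n p) = Xv n ((p.1:ℕ)+1) := by
      unfold rootForm
      rw [ctr_fst, ctr_snd, qmap_le n p.1 (by omega), qmap_top n p.2 hc,
        Xv_eq_zero n (n+1) (by omega), sub_zero]
    rw [key]
    unfold rootForm
    rw [sub_RF, Xv_succ, Xv_succ, if_neg (by omega), if_neg (by omega),
      Xv_eq_zero n ((p.2:ℕ)+1) (by omega), map_zero]
    exact sub_zero _
  · have key : rootForm n (ctr n p) = Xv n ((p.1:ℕ)+1) - Xv n ((p.2:ℕ)+1) := by
      unfold rootForm
      rw [ctr_fst, ctr_snd, qmap_le n p.1 (by omega), qmap_le n p.2 (by omega)]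
    rw [key, map_sub]
    unfold rootForm
    rw [sub_RF, Xv_succ, Xv_succ, if_neg (by omega), if_neg (by omega)]
    rfl

section Laurent
open RatFunc Polynomial
variable {K : Type} [Field K]
-- laurent

section Res

open LaurentSeries PowerSeries

noncomputable def psOf (b : K) {ι : Type} (s : Finset ι) (a : ι → K) : PowerSeries K :=
  PowerSeries.C b * ∏ i ∈ s, (PowerSeries.C (a i) - PowerSeries.X)

theorem constCoeff_psOf (b : K) {ι : Type} (s : Finset ι) (a : ι → K) :
    PowerSeries.constantCoeff (psOf b s a) = b * ∏ i ∈ s, a i := by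
  simp [psOf, map_prod]

theorem coe_psOf (b : K) {ι : Type} (s : Finset ι) (a : ι → K) :
    ((psOf b s a : PowerSeries K) : LaurentSeries K)
      = ((RatFunc.C b * ∏ i ∈ s, (RatFunc.C (a i) - RatFunc.X) : RatFunc K) : LaurentSeries K) := by
  simp only [psOf, PowerSeries.coe_mul, map_mul]
  congr 1
  · rw [← RatFunc.algebraMap_C, ← Polynomial.coe_C]
    exact (RatFunc.coe_coe (F := K) _)
  · rw [map_prod (HahnSeries.ofPowerSeries ℤ K), map_prod (algebraMap (RatFunc K) (LaurentSeries K))]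
    apply Finset.prod_congr rfl
    intro i _
    rw [PowerSeries.coe_sub, PowerSeries.coe_X,
      map_sub, RatFunc.coe_X, ← RatFunc.algebraMap_C, ← Polynomial.coe_C]
    exact congrArg (· - _) (RatFunc.coe_coe (F := K) _)

theorem inv_coe_ps (φ : PowerSeries K) (h : PowerSeries.constantCoeff φ ≠ 0) :
    ((φ : LaurentSeries K))⁻¹ = ((φ⁻¹ : PowerSeries K) : LaurentSeries K) := by
  refine inv_eq_of_mul_eq_one_right ?_
  rw [← PowerSeries.coe_mul, PowerSeries.mul_inv_cancel _ h, PowerSeries.coe_one]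

theorem resA (b : K) {ι : Type} (s : Finset ι) (a : ι → K) (ha : ∀ i ∈ s, a i ≠ 0) :
    (((RatFunc.C b * ∏ i ∈ s, (RatFunc.C (a i) - RatFunc.X))⁻¹ : RatFunc K) :
      LaurentSeries K).coeff (-1) = 0 := by
  by_cases hb : b = 0
  · simp [hb]
  have hc : PowerSeries.constantCoeff (psOf b s a) ≠ 0 := by
    rw [constCoeff_psOf]
    exact mul_ne_zero hb (Finset.prod_ne_zero_iff.2 ha)
  rw [show ((((RatFunc.C b * ∏ i ∈ s, (RatFunc.C (a i) - RatFunc.X))⁻¹ : RatFunc K)) :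
      LaurentSeries K) = (((RatFunc.C b * ∏ i ∈ s, (RatFunc.C (a i) - RatFunc.X)) : RatFunc K) :
      LaurentSeries K)⁻¹ from map_inv₀ (algebraMap (RatFunc K) (LaurentSeries K)) _]
  rw [← coe_psOf, inv_coe_ps _ hc, PowerSeries.coeff_coe]
  simp

theorem resB (b : K) {ι : Type} (s : Finset ι) (a : ι → K) (ha : ∀ i ∈ s, a i ≠ 0) :
    (((RatFunc.X * (RatFunc.C b * ∏ i ∈ s, (RatFunc.C (a i) - RatFunc.X)))⁻¹ : RatFunc K) :
      LaurentSeries K).coeff (-1) = (b * ∏ i ∈ s, a i)⁻¹ := by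
  by_cases hb : b = 0
  · simp [hb]
  have hc : PowerSeries.constantCoeff (psOf b s a) ≠ 0 := by
    rw [constCoeff_psOf]
    exact mul_ne_zero hb (Finset.prod_ne_zero_iff.2 ha)
  rw [show ((((RatFunc.X * (RatFunc.C b * ∏ i ∈ s, (RatFunc.C (a i) - RatFunc.X)))⁻¹ : RatFunc K)) :
      LaurentSeries K) = ((((RatFunc.X * (RatFunc.C b * ∏ i ∈ s, (RatFunc.C (a i) - RatFunc.X))) : RatFunc K)) :
      LaurentSeries K)⁻¹ from map_inv₀ (algebraMap (RatFunc K) (LaurentSeries K)) _]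
  rw [map_mul, ← coe_psOf, mul_inv, inv_coe_ps _ hc, RatFunc.coe_X]
  have hX : (HahnSeries.single (1:ℤ) (1:K))⁻¹ = HahnSeries.single (-1:ℤ) (1:K) := by
    refine inv_eq_of_mul_eq_one_right ?_
    rw [HahnSeries.single_mul_single, one_mul]
    norm_num [HahnSeries.single_zero_one]
  rw [hX]
  have := HahnSeries.coeff_single_mul_add (r := (1:K))
      (x := (((psOf b s a)⁻¹ : PowerSeries K) : LaurentSeries K)) (a := 0) (b := -1)
  rw [zero_add] at this
  rw [this, one_mul]
  rw [PowerSeries.coeff_coe]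
  simp only [show ¬((0:ℤ) < 0) by norm_num, if_false]
  rw [show ((0:ℤ).natAbs) = 0 from rfl]
  rw [PowerSeries.coeff_zero_eq_constantCoeff_apply, PowerSeries.constantCoeff_inv,
    constCoeff_psOf]

end Res
end Laurent

-- part 3
section Part3
variable (n : ℕ) (σ : Finset (Fin (n+2) × Fin (n+2)))

def Tset : Finset (Fin (n+2) × Fin (n+2)) := σ.filter (fun p => (p.2:ℕ) = n)
def Uset : Finset (Fin (n+2) × Fin (n+2)) := σ.filter (fun p => p ≠ e0 n ∧ (p.2:ℕ) ≠ n)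

theorem erase_eq_TU : σ.erase (e0 n) = Tset n σ ∪ Uset n σ := by
  ext p
  simp only [Finset.mem_erase, Finset.mem_union, Tset, Uset, Finset.mem_filter]
  constructor
  · rintro ⟨hne, hp⟩
    by_cases h : (p.2:ℕ) = n
    · exact Or.inl ⟨hp, h⟩
    · exact Or.inr ⟨hp, hne, h⟩
  · rintro (⟨hp, h⟩ | ⟨hp, hne, h⟩)
    · refine ⟨?_, hp⟩
      intro he; rw [he] at h; simp [e0] at h
    · exact ⟨hne, hp⟩

theorem TU_disjoint : Disjoint (Tset n σ) (Uset n σ) := by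
  rw [Finset.disjoint_left]
  intro p hT hU
  simp only [Tset, Uset, Finset.mem_filter] at hT hU
  exact hU.2.2 hT.2

theorem prod_erase_eq (hpos : ∀ p ∈ σ, p.1 < p.2) :
    (∏ p ∈ σ.erase (e0 n), rootForm (n+1) p : RatFunc (RF n))
      = RatFunc.C (∏ p ∈ Uset n σ, rootForm n (ctr n p)) *
        ∏ p ∈ Tset n σ, (RatFunc.C (rootForm n (ctr n p)) - RatFunc.X) := by
  have hT : (∏ p ∈ Tset n σ, rootForm (n+1) p : RatFunc (RF n))
      = ∏ p ∈ Tset n σ, (RatFunc.C (rootForm n (ctr n p)) - RatFunc.X) := by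
    apply Finset.prod_congr rfl
    intro p hp
    rw [Tset, Finset.mem_filter] at hp
    exact rootForm_T n p (hpos p hp.1) hp.2
  have hU : (∏ p ∈ Uset n σ, rootForm (n+1) p : RatFunc (RF n))
      = ∏ p ∈ Uset n σ, RatFunc.C (rootForm n (ctr n p)) := by
    apply Finset.prod_congr rfl
    intro p hp
    rw [Uset, Finset.mem_filter] at hp
    exact rootForm_U n p (hpos p hp.1) hp.2.1 hp.2.2
  rw [erase_eq_TU, Finset.prod_union (M := RatFunc (RF n)) (TU_disjoint n σ) (f := rootForm (n+1)), hT, hU, ← map_prod, mul_comm]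

theorem haT (hpos : ∀ p ∈ σ, p.1 < p.2) :
    ∀ p ∈ Tset n σ, rootForm n (ctr n p) ≠ 0 := by
  intro p hp
  rw [Tset, Finset.mem_filter] at hp
  exact rootForm_T_ne n p (hpos p hp.1) hp.2

theorem resRF_prod_mem (hpos : ∀ p ∈ σ, p.1 < p.2) (he : e0 n ∈ σ) :
    resRF n (∏ p ∈ σ, rootForm (n+1) p)⁻¹
      = (∏ p ∈ σ.erase (e0 n), rootForm n (ctr n p))⁻¹ := by
  rw [← Finset.mul_prod_erase (M := RatFunc (RF n)) σ (rootForm (n+1)) he, rootForm_e0, prod_erase_eq n σ hpos]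
  unfold resRF
  rw [resB _ _ _ (haT n σ hpos)]
  congr 1
  rw [erase_eq_TU, Finset.prod_union (TU_disjoint n σ), mul_comm]

theorem resRF_prod_notmem (hpos : ∀ p ∈ σ, p.1 < p.2) (he : e0 n ∉ σ) :
    resRF n (∏ p ∈ σ, rootForm (n+1) p)⁻¹ = 0 := by
  have h : σ.erase (e0 n) = σ := Finset.erase_eq_of_notMem he
  rw [← h, prod_erase_eq n σ hpos]
  unfold resRF
  exact resA _ _ _ (haT n σ hpos)

end Part3

def CC (r : ℕ) (σ : Finset (Fin (r+1) × Fin (r+1))) : Prop :=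
  ∀ k : Fin r, ∃ c : Fin (r+1) × Fin (r+1) → ℚ, (∀ p, 0 ≤ c p) ∧
    (∑ p ∈ σ, c p • rootVQ r p) = rootVQ r (k.castSucc, Fin.last r)

theorem li_iff {ι : Type*} [DecidableEq ι] (s : Finset ι) (v : ι → (Fin m → ℚ)) :
    LinearIndependent ℚ (fun x : {a // a ∈ s} => v x.1) ↔
      ∀ c : ι → ℚ, (∑ p ∈ s, c p • v p) = 0 → ∀ p ∈ s, c p = 0 := by
  rw [Fintype.linearIndependent_iff]
  constructor
  · intro h c hc p hp
    refine h (fun x => c x.1) ?_ ⟨p, hp⟩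
    rw [Finset.univ_eq_attach, ← hc]
    exact Finset.sum_attach s (fun p => c p • v p)
  · intro h g hg x
    have h2 : ∀ p ∈ s, (fun p => if hp : p ∈ s then g ⟨p, hp⟩ else 0) p = 0 := by
      refine h _ ?_
      rw [← Finset.sum_attach s (fun p => (if hp : p ∈ s then g ⟨p, hp⟩ else 0) • v p)]
      rw [Finset.univ_eq_attach] at hg
      rw [← hg]
      apply Finset.sum_congr rfl
      intro x _
      rw [dif_pos x.2]
    have := h2 x.1 x.2
    simpa [x.2] using this

noncomputable def piL (n : ℕ) : (Fin (n+2) → ℚ) →ₗ[ℚ] (Fin (n+1) → ℚ) where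
  toFun a := fun j => a j.castSucc + if (j:ℕ) = n then a (Fin.last (n+1)) else 0
  map_add' x y := by
    funext j; by_cases h : (j:ℕ) = n <;> simp [h] <;> ring
  map_smul' c x := by
    funext j; by_cases h : (j:ℕ) = n <;> simp [h] <;> ring

theorem piL_apply (n : ℕ) (a : Fin (n+2) → ℚ) (j : Fin (n+1)) :
    piL n a j = a j.castSucc + if (j:ℕ) = n then a (Fin.last (n+1)) else 0 := rfl

theorem fst_lt (n : ℕ) (p : Fin (n+2) × Fin (n+2)) (h1 : (p.1:ℕ) < (p.2:ℕ))
    (hne : p ≠ e0 n) : (p.1:ℕ) < n := by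
  by_contra h
  have e1 : (p.1:ℕ) = n := by omega
  have e2 : (p.2:ℕ) = n+1 := by omega
  exact hne (Prod.ext (Fin.ext e1) (Fin.ext e2))

theorem piL_root (n : ℕ) (p : Fin (n+2) × Fin (n+2)) (h1 : (p.1:ℕ) < (p.2:ℕ))
    (hne : p ≠ e0 n) : piL n (rootVQ (n+1) p) = rootVQ n (ctr n p) := by
  have hp1 : (p.1:ℕ) < n := fst_lt n p h1 hne
  have hp2 : (p.2:ℕ) ≤ n + 1 := by omega
  funext j
  have hj : (j:ℕ) < n + 1 := j.isLt
  rw [piL_apply]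
  simp only [rootVQ, ctr, qmap, Fin.ext_iff, Fin.coe_castSucc, Fin.val_last]
  split_ifs
  any_goals (exfalso; omega)
  all_goals norm_num

theorem piL_e0 (n : ℕ) : piL n (rootVQ (n+1) (e0 n)) = 0 := by
  funext j
  rw [piL_apply]
  have h1 : ((e0 n).1 : ℕ) = n := rfl
  have h2 : ((e0 n).2 : ℕ) = n+1 := rfl
  have hj : (j:ℕ) < n + 1 := j.isLt
  simp only [rootVQ, Fin.ext_iff, Fin.coe_castSucc, Fin.val_last, h1, h2, Pi.zero_apply]
  split_ifs
  any_goals (exfalso; omega)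
  all_goals norm_num

theorem piL_target (n : ℕ) (k : Fin n) :
    piL n (rootVQ (n+1) (k.castSucc.castSucc, Fin.last (n+1)))
      = rootVQ n (k.castSucc, Fin.last n) := by
  funext j
  have hj : (j:ℕ) < n + 1 := j.isLt
  have hk : (k:ℕ) < n := k.isLt
  rw [piL_apply]
  simp only [rootVQ, Fin.ext_iff, Fin.coe_castSucc, Fin.val_last]
  split_ifs
  any_goals (exfalso; omega)
  all_goals norm_num

theorem piL_ker (n : ℕ) (a : Fin (n+2) → ℚ) (ha : piL n a = 0) :
    a = a ⟨n, by omega⟩ • rootVQ (n+1) (e0 n) := by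
  have key : ∀ j : Fin (n+1), a j.castSucc + (if (j:ℕ) = n then a (Fin.last (n+1)) else 0) = 0 :=
    fun j => congrFun ha j
  have h1 : ∀ j : Fin (n+2), (j:ℕ) < n → a j = 0 := by
    intro j hj
    have := key ⟨j, by omega⟩
    rw [if_neg (show ¬((j:ℕ) = n) by omega)] at this
    have hcast : (⟨(j:ℕ), by omega⟩ : Fin (n+1)).castSucc = j := Fin.ext rfl
    rwa [hcast, add_zero] at this
  have h2 : a (⟨n, by omega⟩ : Fin (n+2)) + a (Fin.last (n+1)) = 0 := by
    have := key ⟨n, by omega⟩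
    rw [if_pos rfl] at this
    have hcast : (⟨n, by omega⟩ : Fin (n+1)).castSucc = (⟨n, by omega⟩ : Fin (n+2)) := Fin.ext rfl
    rwa [hcast] at this
  funext j
  rw [Pi.smul_apply, smul_eq_mul]
  simp only [rootVQ]
  have he1 : ((e0 n).1 : ℕ) = n := rfl
  have he2 : ((e0 n).2 : ℕ) = n+1 := rfl
  by_cases hj1 : (j:ℕ) < n
  · rw [if_neg (by rw [Fin.ext_iff]; omega), if_neg (by rw [Fin.ext_iff]; omega),
      mul_zero, h1 j hj1]
  · by_cases hj2 : (j:ℕ) = n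
    · have : j = (⟨n, by omega⟩ : Fin (n+2)) := Fin.ext hj2
      rw [if_pos (by rw [Fin.ext_iff]; omega), mul_one, this]
    · have hj3 : (j:ℕ) = n+1 := by omega
      have : j = Fin.last (n+1) := Fin.ext (by simpa using hj3)
      rw [if_neg (by rw [Fin.ext_iff]; omega), if_pos (by rw [Fin.ext_iff]; omega)]
      rw [this]
      linarith [h2]


theorem root_at_n (n : ℕ) (p : Fin (n+2) × Fin (n+2)) (h1 : (p.1:ℕ) < (p.2:ℕ))
    (hne : p ≠ e0 n) : rootVQ (n+1) p ⟨n, by omega⟩ ≤ 0 := by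
  have hp1 : (p.1:ℕ) < n := fst_lt n p h1 hne
  simp only [rootVQ]
  split_ifs with hA hB
  · exfalso
    have hval : n = (p.1:ℕ) := congrArg Fin.val hA
    omega
  · norm_num
  · norm_num

theorem noCC (n : ℕ) (σ : Finset (Fin (n+2) × Fin (n+2)))
    (hpos : ∀ p ∈ σ, p.1 < p.2) (he : e0 n ∉ σ) : ¬ CC (n+1) σ := by
  intro h
  obtain ⟨c, hc0, hsum⟩ := h ⟨n, by omega⟩
  have hco := congrFun hsum (⟨n, by omega⟩ : Fin (n+2))
  rw [Finset.sum_apply] at hco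
  have hrhs : rootVQ (n+1) ((⟨n, by omega⟩ : Fin (n+1)).castSucc, Fin.last (n+1))
      (⟨n, by omega⟩ : Fin (n+2)) = 1 := by
    simp only [rootVQ]
    rw [if_pos (show (⟨n, by omega⟩ : Fin (n+2)) = (⟨n, by omega⟩ : Fin (n+1)).castSucc
      from Fin.ext rfl)]
  rw [hrhs] at hco
  have hle : (∑ p ∈ σ, (c p • rootVQ (n+1) p) (⟨n, by omega⟩ : Fin (n+2))) ≤ 0 := by
    apply Finset.sum_nonpos
    intro p hp
    rw [Pi.smul_apply, smul_eq_mul]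
    have h1 : (p.1:ℕ) < (p.2:ℕ) := hpos p hp
    have hne : p ≠ e0 n := fun hh => he (hh ▸ hp)
    have := mul_le_mul_of_nonneg_left (root_at_n n p h1 hne) (hc0 p)
    simpa using this
  rw [hco] at hle
  linarith

theorem no_parallel (n : ℕ) (σ : Finset (Fin (n+2) × Fin (n+2))) (he : e0 n ∈ σ)
    (hindep : LinearIndependent ℚ (fun p : {x // x ∈ σ} => rootVQ (n+1) p.1))
    (a b : Fin (n+2) × Fin (n+2)) (ha : a ∈ σ) (hb : b ∈ σ)
    (h12 : a.1 = b.1) (ha2 : (a.2:ℕ) = n+1) (hb2 : (b.2:ℕ) = n) (hb1 : (b.1:ℕ) < n) :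
    False := by
  have h12v : (a.1:ℕ) = (b.1:ℕ) := congrArg Fin.val h12
  have ha1 : (a.1:ℕ) < n := by omega
  have he1 : ((e0 n).1 : ℕ) = n := rfl
  have he2 : ((e0 n).2 : ℕ) = n+1 := rfl
  have hane : a ≠ e0 n := by
    intro hh; rw [hh] at ha1; rw [he1] at ha1; omega
  have hbne : b ≠ e0 n := by
    intro hh; rw [hh] at hb2; rw [he2] at hb2; omega
  have hab : a ≠ b := by
    intro hh; rw [hh] at ha2; omega
  set c : Fin (n+2) × Fin (n+2) → ℚ :=
    fun x => if x = a then 1 else if x = b then -1 else if x = e0 n then -1 else 0 with hc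
  have hca : c a = 1 := by
    show (if a = a then (1:ℚ) else if a = b then -1 else if a = e0 n then -1 else 0) = 1
    rw [if_pos rfl]
  have hcb : c b = -1 := by
    show (if b = a then (1:ℚ) else if b = b then -1 else if b = e0 n then -1 else 0) = -1
    rw [if_neg (Ne.symm hab), if_pos rfl]
  have hce : c (e0 n) = -1 := by
    show (if e0 n = a then (1:ℚ) else if e0 n = b then -1 else if e0 n = e0 n then -1 else 0) = -1
    rw [if_neg (Ne.symm hane), if_neg (Ne.symm hbne), if_pos rfl]
  have hsum : (∑ p ∈ σ, c p • rootVQ (n+1) p) = 0 := by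
    have hsub : ({a, b, e0 n} : Finset _) ⊆ σ := by
      intro x hx
      simp only [Finset.mem_insert, Finset.mem_singleton] at hx
      rcases hx with rfl | rfl | rfl <;> assumption
    rw [← Finset.sum_subset hsub ?_]
    · have hnm1 : a ∉ ({b, e0 n} : Finset _) := by
        simp only [Finset.mem_insert, Finset.mem_singleton]
        push_neg
        exact ⟨hab, hane⟩
      have hnm2 : b ∉ ({e0 n} : Finset _) := by
        simp only [Finset.mem_singleton]; exact hbne
      rw [Finset.sum_insert hnm1, Finset.sum_insert hnm2, Finset.sum_singleton,
        hca, hcb, hce, one_smul, neg_one_smul, neg_one_smul]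
      funext k
      have hk : (k:ℕ) < n + 2 := k.isLt
      simp only [Pi.add_apply, Pi.neg_apply, Pi.zero_apply, rootVQ, Fin.ext_iff, he1, he2]
      rw [show ((b.1:ℕ)) = ((a.1:ℕ)) from h12v.symm]
      split_ifs
      any_goals (exfalso; omega)
      all_goals norm_num
    · intro x hx hnx
      simp only [Finset.mem_insert, Finset.mem_singleton] at hnx
      push_neg at hnx
      show (if x = a then (1:ℚ) else if x = b then -1 else if x = e0 n then -1 else 0)
          • rootVQ (n+1) x = 0
      rw [if_neg hnx.1, if_neg hnx.2.1, if_neg hnx.2.2, zero_smul]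
  have := (li_iff σ (rootVQ (n+1))).1 hindep c hsum a ha
  rw [hca] at this
  norm_num at this

theorem ctr_injOn (n : ℕ) (σ : Finset (Fin (n+2) × Fin (n+2)))
    (hpos : ∀ p ∈ σ, p.1 < p.2) (he : e0 n ∈ σ)
    (hindep : LinearIndependent ℚ (fun p : {x // x ∈ σ} => rootVQ (n+1) p.1)) :
    Set.InjOn (ctr n) ↑(σ.erase (e0 n)) := by
  intro p hp p' hp' heq
  rw [Finset.mem_coe, Finset.mem_erase] at hp hp'
  obtain ⟨hpne, hpσ⟩ := hp
  obtain ⟨hpne', hpσ'⟩ := hp'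
  by_contra hne
  have h1 : (p.1:ℕ) < (p.2:ℕ) := hpos p hpσ
  have h1' : (p'.1:ℕ) < (p'.2:ℕ) := hpos p' hpσ'
  have hq1 : (p.1:ℕ) < n := fst_lt n p h1 hpne
  have hq1' : (p'.1:ℕ) < n := fst_lt n p' h1' hpne'
  have hfst := congrArg (fun u => ((u.1 : Fin (n+1)) : ℕ)) heq
  have hsnd := congrArg (fun u => ((u.2 : Fin (n+1)) : ℕ)) heq
  simp only [ctr, qmap] at hfst hsnd
  have hfst' : min ((p.1:ℕ)) n = min ((p'.1:ℕ)) n := hfst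
  have hsnd' : min ((p.2:ℕ)) n = min ((p'.2:ℕ)) n := hsnd
  have heq1 : p.1 = p'.1 := Fin.ext (by omega)
  have hp2 : (p.2:ℕ) ≤ n + 1 := by omega
  have hp2' : (p'.2:ℕ) ≤ n + 1 := by omega
  by_cases hc : (p.2:ℕ) = n+1
  · by_cases hc' : (p'.2:ℕ) = n+1
    · exact hne (Prod.ext heq1 (Fin.ext (by omega)))
    · have : (p'.2:ℕ) = n := by omega
      exact no_parallel n σ he hindep p p' hpσ hpσ' heq1 hc this (by omega)
  · by_cases hc' : (p'.2:ℕ) = n+1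
    · have : (p.2:ℕ) = n := by omega
      exact no_parallel n σ he hindep p' p hpσ' hpσ heq1.symm hc' this (by omega)
    · exact hne (Prod.ext heq1 (Fin.ext (by omega)))

theorem ctr_pos (n : ℕ) (σ : Finset (Fin (n+2) × Fin (n+2)))
    (hpos : ∀ p ∈ σ, p.1 < p.2) :
    ∀ u ∈ (σ.erase (e0 n)).image (ctr n), u.1 < u.2 := by
  intro u hu
  obtain ⟨p, hp, rfl⟩ := Finset.mem_image.1 hu
  rw [Finset.mem_erase] at hp
  obtain ⟨hpne, hpσ⟩ := hp
  have h1 : (p.1:ℕ) < (p.2:ℕ) := hpos p hpσ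
  have hq1 : (p.1:ℕ) < n := fst_lt n p h1 hpne
  exact (by omega : min ((p.1:ℕ)) n < min ((p.2:ℕ)) n)



theorem piL_sum {ι : Type*} (n : ℕ) (t : Finset ι) (c : ι → ℚ) (v : ι → (Fin (n+2) → ℚ)) :
    piL n (∑ p ∈ t, c p • v p) = ∑ p ∈ t, c p • piL n (v p) := by
  rw [map_sum]
  exact Finset.sum_congr rfl fun p _ => (piL n).map_smul (c p) (v p)

theorem coneFwd (n : ℕ) (σ : Finset (Fin (n+2) × Fin (n+2)))
    (hpos : ∀ p ∈ σ, p.1 < p.2) (he : e0 n ∈ σ)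
    (hCC : CC (n+1) σ) : CC n ((σ.erase (e0 n)).image (ctr n)) := by
  intro k
  obtain ⟨c, hc0, hsum⟩ := hCC k.castSucc
  refine ⟨fun u => ∑ p ∈ σ.erase (e0 n), (if ctr n p = u then c p else 0), ?_, ?_⟩
  · intro u
    apply Finset.sum_nonneg
    intro p _
    split_ifs
    · exact hc0 p
    · exact le_refl 0
  · have h1 : (∑ u ∈ (σ.erase (e0 n)).image (ctr n),
        (∑ p ∈ σ.erase (e0 n), (if ctr n p = u then c p else 0)) • rootVQ n u)
        = ∑ p ∈ σ.erase (e0 n), c p • rootVQ n (ctr n p) := by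
      rw [Finset.sum_congr rfl (fun u _ => Finset.sum_smul)]
      rw [Finset.sum_comm]
      apply Finset.sum_congr rfl
      intro p hp
      rw [Finset.sum_congr rfl (fun u (_ : u ∈ (σ.erase (e0 n)).image (ctr n)) => by
        rw [ite_smul, zero_smul])]
      rw [Finset.sum_ite_eq _ (ctr n p) (fun u => c p • rootVQ n u)]
      rw [if_pos (Finset.mem_image.2 ⟨p, hp, rfl⟩)]
    rw [h1]
    have h2 : ∑ p ∈ σ.erase (e0 n), c p • rootVQ n (ctr n p)
        = piL n (∑ p ∈ σ.erase (e0 n), c p • rootVQ (n+1) p) := by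
      rw [piL_sum]
      apply Finset.sum_congr rfl
      intro p hp
      rw [Finset.mem_erase] at hp
      rw [piL_root n p (hpos p hp.2) hp.1]
    rw [h2]
    have h3 : (∑ p ∈ σ.erase (e0 n), c p • rootVQ (n+1) p)
        = (∑ p ∈ σ, c p • rootVQ (n+1) p) - c (e0 n) • rootVQ (n+1) (e0 n) := by
      rw [← Finset.add_sum_erase σ _ he]
      abel
    rw [h3, map_sub, map_smul, piL_e0, smul_zero, sub_zero, hsum, piL_target]

theorem coneBwd (n : ℕ) (σ : Finset (Fin (n+2) × Fin (n+2)))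
    (hpos : ∀ p ∈ σ, p.1 < p.2) (he : e0 n ∈ σ)
    (hinj : Set.InjOn (ctr n) ↑(σ.erase (e0 n)))
    (hCC : CC n ((σ.erase (e0 n)).image (ctr n))) : CC (n+1) σ := by
  have hinj' : ∀ x ∈ σ.erase (e0 n), ∀ y ∈ σ.erase (e0 n), ctr n x = ctr n y → x = y :=
    fun x hx y hy => hinj (Finset.mem_coe.2 hx) (Finset.mem_coe.2 hy)
  intro k1
  by_cases hk : (k1:ℕ) = n
  · refine ⟨fun x => if x = e0 n then 1 else 0,
      fun p => by show (0:ℚ) ≤ if p = e0 n then 1 else 0; split_ifs <;> norm_num, ?_⟩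
    try beta_reduce
    have hpair : (k1.castSucc, Fin.last (n+1)) = e0 n :=
      Prod.ext (Fin.ext (by simpa [e0] using hk)) (Fin.ext rfl)
    rw [hpair]
    rw [Finset.sum_congr rfl (fun p (_ : p ∈ σ) => by rw [ite_smul, one_smul, zero_smul])]
    rw [Finset.sum_ite_eq' σ (e0 n) (fun p => rootVQ (n+1) p)]
    rw [if_pos he]
  · have hkn : (k1:ℕ) < n := by
      have := k1.isLt; omega
    obtain ⟨c'', h0, hs⟩ := hCC ⟨(k1:ℕ), hkn⟩
    set S : Fin (n+2) → ℚ := ∑ p ∈ σ.erase (e0 n), c'' (ctr n p) • rootVQ (n+1) p with hS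
    set tgt : Fin (n+2) → ℚ := rootVQ (n+1) (k1.castSucc, Fin.last (n+1)) with htgt
    have hcast : (⟨(k1:ℕ), hkn⟩ : Fin n).castSucc = k1 := Fin.ext rfl
    rw [hcast] at hs
    have hpiS : piL n S = rootVQ n (k1, Fin.last n) := by
      rw [hS, piL_sum]
      have hmid : ∑ p ∈ σ.erase (e0 n), c'' (ctr n p) • piL n (rootVQ (n+1) p)
          = ∑ p ∈ σ.erase (e0 n), c'' (ctr n p) • rootVQ n (ctr n p) := by
        apply Finset.sum_congr rfl
        intro p hp
        rw [Finset.mem_erase] at hp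
        rw [piL_root n p (hpos p hp.2) hp.1]
      rw [hmid, ← Finset.sum_image (f := fun u => c'' u • rootVQ n u) hinj']
      exact hs
    have hpiT : piL n tgt = rootVQ n (k1, Fin.last n) := by
      have h := piL_target n (⟨(k1:ℕ), hkn⟩ : Fin n)
      rw [hcast] at h
      rw [htgt]
      exact h
    have hker : S - tgt = (S - tgt) ⟨n, by omega⟩ • rootVQ (n+1) (e0 n) :=
      piL_ker n _ (by rw [map_sub, hpiS, hpiT, sub_self])
    set t := (S - tgt) ⟨n, by omega⟩ with ht
    have htgt0 : tgt ⟨n, by omega⟩ = 0 := by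
      rw [htgt]
      simp only [rootVQ]
      rw [if_neg, if_neg]
      · intro hh
        have hv : n = n+1 := congrArg Fin.val hh
        omega
      · intro hh
        have hv : n = (k1:ℕ) := congrArg Fin.val hh
        omega
    have hS0 : S ⟨n, by omega⟩ ≤ 0 := by
      rw [hS, Finset.sum_apply]
      apply Finset.sum_nonpos
      intro p hp
      rw [Finset.mem_erase] at hp
      rw [Pi.smul_apply, smul_eq_mul]
      have := mul_le_mul_of_nonneg_left (root_at_n n p (hpos p hp.2) hp.1) (h0 (ctr n p))
      simpa using this
    have htle : t ≤ 0 := by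
      rw [ht, Pi.sub_apply, htgt0, sub_zero]
      exact hS0
    refine ⟨fun x => if x = e0 n then -t else c'' (ctr n x), ?_, ?_⟩
    · intro p
      show (0:ℚ) ≤ if p = e0 n then -t else c'' (ctr n p)
      split_ifs
      · linarith
      · exact h0 _
    · try beta_reduce
      rw [← Finset.add_sum_erase σ _ he]
      have hrest : ∑ p ∈ σ.erase (e0 n),
          (if p = e0 n then -t else c'' (ctr n p)) • rootVQ (n+1) p = S := by
        rw [hS]
        apply Finset.sum_congr rfl
        intro p hp
        rw [Finset.mem_erase] at hp
        rw [if_neg hp.1]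
      rw [hrest, if_pos rfl]
      have hfin : tgt = S - t • rootVQ (n+1) (e0 n) := by
        rw [← hker]
        abel
      rw [hfin, neg_smul]
      abel

theorem indepTransfer (n : ℕ) (σ : Finset (Fin (n+2) × Fin (n+2)))
    (hpos : ∀ p ∈ σ, p.1 < p.2) (he : e0 n ∈ σ)
    (hinj : Set.InjOn (ctr n) ↑(σ.erase (e0 n)))
    (hindep : LinearIndependent ℚ (fun p : {x // x ∈ σ} => rootVQ (n+1) p.1)) :
    LinearIndependent ℚ
      (fun u : {x // x ∈ (σ.erase (e0 n)).image (ctr n)} => rootVQ n u.1) := by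
  have hinj' : ∀ x ∈ σ.erase (e0 n), ∀ y ∈ σ.erase (e0 n), ctr n x = ctr n y → x = y :=
    fun x hx y hy => hinj (Finset.mem_coe.2 hx) (Finset.mem_coe.2 hy)
  rw [li_iff]
  intro d hd u hu
  set T : Fin (n+2) → ℚ := ∑ p ∈ σ.erase (e0 n), d (ctr n p) • rootVQ (n+1) p with hT
  have hpiT : piL n T = 0 := by
    rw [hT, piL_sum]
    have hmid : ∑ p ∈ σ.erase (e0 n), d (ctr n p) • piL n (rootVQ (n+1) p)
        = ∑ p ∈ σ.erase (e0 n), d (ctr n p) • rootVQ n (ctr n p) := by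
      apply Finset.sum_congr rfl
      intro p hp
      rw [Finset.mem_erase] at hp
      rw [piL_root n p (hpos p hp.2) hp.1]
    rw [hmid, ← Finset.sum_image (f := fun u => d u • rootVQ n u) hinj']
    exact hd
  have hker := piL_ker n T hpiT
  set t := T ⟨n, by omega⟩ with ht
  have hzero : ∑ p ∈ σ, (if p = e0 n then -t else d (ctr n p)) • rootVQ (n+1) p = 0 := by
    rw [← Finset.add_sum_erase σ _ he]
    have hrest : ∑ p ∈ σ.erase (e0 n),
        (if p = e0 n then -t else d (ctr n p)) • rootVQ (n+1) p = T := by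
      rw [hT]
      apply Finset.sum_congr rfl
      intro p hp
      rw [Finset.mem_erase] at hp
      rw [if_neg hp.1]
    rw [hrest, if_pos rfl, hker, neg_smul]
    abel
  have hall := (li_iff σ (rootVQ (n+1))).1 hindep _ hzero
  obtain ⟨p, hp, rfl⟩ := Finset.mem_image.1 hu
  have hthis := hall p (Finset.mem_of_mem_erase hp)
  rw [Finset.mem_erase] at hp
  rwa [if_neg hp.1] at hthis


theorem Ires_zero : ∀ n : ℕ, Ires n 0 = 0 := by
  intro n
  induction n with
  | zero => rfl
  | succ n ih =>
    show Ires n (resRF n (0 : RatFunc (RF n))) = 0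
    have h0 : resRF n (0 : RatFunc (RF n)) = 0 := by
      unfold resRF
      rw [map_zero]
      rfl
    rw [h0]
    exact ih

theorem auxmain : ∀ r : ℕ, ∀ σ : Finset (Fin (r+1) × Fin (r+1)),
    (∀ p ∈ σ, p.1 < p.2) → σ.card = r →
    LinearIndependent ℚ (fun p : {x // x ∈ σ} => rootVQ r p.1) →
    (CC r σ → Ires r (∏ p ∈ σ, rootForm r p)⁻¹ = 1) ∧
    (¬ CC r σ → Ires r (∏ p ∈ σ, rootForm r p)⁻¹ = 0) := by
  intro r
  induction r with
  | zero =>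
    intro σ hpos hcard hindep
    have hσ : σ = ∅ := Finset.card_eq_zero.mp hcard
    subst hσ
    constructor
    · intro _
      rw [Finset.prod_empty, inv_one]
      rfl
    · intro h
      exact absurd (fun k => k.elim0) h
  | succ n ih =>
    intro σ hpos hcard hindep
    by_cases he : e0 n ∈ σ
    · have hinj := ctr_injOn n σ hpos he hindep
      have hinj' : ∀ x ∈ σ.erase (e0 n), ∀ y ∈ σ.erase (e0 n), ctr n x = ctr n y → x = y :=
        fun x hx y hy => hinj (Finset.mem_coe.2 hx) (Finset.mem_coe.2 hy)
      have hpos'' := ctr_pos n σ hpos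
      have hcard'' : ((σ.erase (e0 n)).image (ctr n)).card = n := by
        rw [Finset.card_image_of_injOn hinj, Finset.card_erase_of_mem he, hcard]
        omega
      have hindep'' := indepTransfer n σ hpos he hinj hindep
      obtain ⟨IH1, IH2⟩ := ih ((σ.erase (e0 n)).image (ctr n)) hpos'' hcard'' hindep''
      have hres : resRF n (∏ p ∈ σ, rootForm (n+1) p)⁻¹
          = (∏ u ∈ (σ.erase (e0 n)).image (ctr n), rootForm n u)⁻¹ := by
        rw [resRF_prod_mem n σ hpos he]
        congr 1
        exact (Finset.prod_image hinj').symm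
      constructor
      · intro hCC
        have key : Ires n (resRF n (∏ p ∈ σ, rootForm (n+1) p)⁻¹) = 1 := by
          rw [hres]
          exact IH1 (coneFwd n σ hpos he hCC)
        exact key
      · intro hCC
        have key : Ires n (resRF n (∏ p ∈ σ, rootForm (n+1) p)⁻¹) = 0 := by
          rw [hres]
          exact IH2 (fun h => hCC (coneBwd n σ hpos he hinj h))
        exact key
    · constructor
      · intro hCC
        exact absurd hCC (noCC n σ hpos he)
      · intro _
        have key : Ires n (resRF n (∏ p ∈ σ, rootForm (n+1) p)⁻¹) = 0 := by
          rw [resRF_prod_notmem n σ hpos he]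
          exact Ires_zero n
        exact key

/-- let `σ` be a set of `r` positive roots of `A_r` forming a basis of
`E_r`, and let `f_σ = 1/∏_{α ∈ σ} α`.  If every `e^k - e^{r+1}` (`1 ≤ k ≤ r`) lies in the
cone generated by `σ`, then `Ires_{x=0} f_σ = 1`; otherwise `Ires_{x=0} f_σ = 0`. -/
theorem stmt1 (r : ℕ) (σ : Finset (Fin (r+1) × Fin (r+1)))
    (hpos : ∀ p ∈ σ, p.1 < p.2) (hcard : σ.card = r)
    (hindep : LinearIndependent ℚ (fun p : {x // x ∈ σ} => rootVQ r p.1)) :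
    ((∀ k : Fin r, ∃ c : Fin (r+1) × Fin (r+1) → ℚ, (∀ p, 0 ≤ c p) ∧
        (∑ p ∈ σ, c p • rootVQ r p) = rootVQ r (k.castSucc, Fin.last r)) →
      Ires r (∏ p ∈ σ, rootForm r p)⁻¹ = 1) ∧
    ((¬ ∀ k : Fin r, ∃ c : Fin (r+1) × Fin (r+1) → ℚ, (∀ p, 0 ≤ c p) ∧
        (∑ p ∈ σ, c p • rootVQ r p) = rootVQ r (k.castSucc, Fin.last r)) →
      Ires r (∏ p ∈ σ, rootForm r p)⁻¹ = 0) := by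
  obtain ⟨h1, h2⟩ := auxmain r σ hpos hcard hindep
  exact ⟨h1, h2⟩
end

section
/- (Conjecture 4 of Chan–Robbins–Yuen) Let n ≥ 3, d = n(n−1)/2, and let F := {X ∈ CRY_n : x_{22} = 0}, a codimension-one face of CRY_n. Then binom(n,2)·(d−1)!·lim_{t→∞} |{X ∈ ℤ^{n×n} : X ∈ t·F}|/t^{d−1} = 3·d!·lim_{t→∞} |{X ∈ ℤ^{n×n} : X ∈ t·CRY_n}|/t^d; that is, binom(n,2) times the relative volume of the face F equals 3 times the relative volume of CRY_n. -/
open scoped Pointwise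

/-- The Chan–Robbins–Yuen polytope: `n × n` real matrices with nonnegative entries, all
row and column sums equal to `1`, and vanishing entries `x_{ij} = 0` for `j ≥ i + 2`. -/
def CRY (n : ℕ) : Set (Matrix (Fin n) (Fin n) ℝ) :=
  {X | (∀ i j, 0 ≤ X i j) ∧ (∀ i, ∑ j, X i j = 1) ∧ (∀ j, ∑ i, X i j = 1) ∧
    ∀ i j : Fin n, (i : ℕ) + 2 ≤ (j : ℕ) → X i j = 0}

/-- The codimension-one face `F = {X ∈ CRY_n : x_{22} = 0}` (1-based entry `(2,2)`). -/
def CRYface (n : ℕ) (h : 2 ≤ n) : Set (Matrix (Fin n) (Fin n) ℝ) :=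
  {X | X ∈ CRY n ∧ X ⟨1, h⟩ ⟨1, h⟩ = 0}

/-- The number of integer matrices lying in the dilate `t · P` of a set of real
matrices. -/
noncomputable def latCount (n : ℕ) (P : Set (Matrix (Fin n) (Fin n) ℝ)) (t : ℕ) : ℕ :=
  Nat.card {X : Matrix (Fin n) (Fin n) ℤ // (fun i j => (X i j : ℝ)) ∈ (t : ℝ) • P}

namespace Stmt7

/-- Integer version of membership in `t • CRY n`. -/
def Good (n : ℕ) (t : ℤ) (X : Matrix (Fin n) (Fin n) ℤ) : Prop :=
  (∀ i j, 0 ≤ X i j) ∧ (∀ i, ∑ j, X i j = t) ∧ (∀ j, ∑ i, X i j = t) ∧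
    ∀ i j : Fin n, (i : ℕ) + 2 ≤ (j : ℕ) → X i j = 0

variable {n : ℕ}

lemma sum_eq_pair {M : Type*} [AddCommMonoid M] {a b : Fin n} (hab : a ≠ b)
    {f : Fin n → M} (hf : ∀ j, j ≠ a → j ≠ b → f j = 0) :
    ∑ j, f j = f a + f b := by
  rw [← Finset.sum_pair hab]
  refine (Finset.sum_subset (Finset.subset_univ _) ?_).symm
  intro x _ hx
  simp only [Finset.mem_insert, Finset.mem_singleton, not_or] at hx
  exact hf x hx.1 hx.2

lemma sum_eq_triple {M : Type*} [AddCommMonoid M] {a b c : Fin n}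
    (hab : a ≠ b) (hac : a ≠ c) (hbc : b ≠ c)
    {f : Fin n → M} (hf : ∀ j, j ≠ a → j ≠ b → j ≠ c → f j = 0) :
    ∑ j, f j = f a + (f b + f c) := by
  have h1 : ∑ j, f j = ∑ x ∈ ({a, b, c} : Finset (Fin n)), f x := by
    refine (Finset.sum_subset (Finset.subset_univ _) ?_).symm
    intro x _ hx
    simp only [Finset.mem_insert, Finset.mem_singleton, not_or] at hx
    exact hf x hx.1 hx.2.1 hx.2.2
  rw [h1, Finset.sum_insert (by simp [hab, hac]), Finset.sum_pair hbc]

lemma pair_le_sum {a b : Fin n} (hab : a ≠ b) {f : Fin n → ℤ} (hf : ∀ j, 0 ≤ f j) :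
    f a + f b ≤ ∑ j, f j := by
  rw [← Finset.sum_pair hab]
  exact Finset.sum_le_sum_of_subset_of_nonneg (Finset.subset_univ _) (fun i _ _ => hf i)

/-! ### indices -/

def e0 (h : 2 < n) : Fin n := ⟨0, by omega⟩
def e1 (h : 2 < n) : Fin n := ⟨1, by omega⟩
def e2 (h : 2 < n) : Fin n := ⟨2, by omega⟩

variable {h : 2 < n}

@[simp] lemma e0_val : (e0 h : Fin n).val = 0 := rfl
@[simp] lemma e1_val : (e1 h : Fin n).val = 1 := rfl
@[simp] lemma e2_val : (e2 h : Fin n).val = 2 := rfl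
@[simp] lemma e0_ne_e1 : e0 h ≠ e1 h := by simp [Fin.ext_iff]
@[simp] lemma e0_ne_e2 : e0 h ≠ e2 h := by simp [Fin.ext_iff]
@[simp] lemma e1_ne_e0 : e1 h ≠ e0 h := by simp [Fin.ext_iff]
@[simp] lemma e1_ne_e2 : e1 h ≠ e2 h := by simp [Fin.ext_iff]
@[simp] lemma e2_ne_e0 : e2 h ≠ e0 h := by simp [Fin.ext_iff]
@[simp] lemma e2_ne_e1 : e2 h ≠ e1 h := by simp [Fin.ext_iff]

lemma eq_e0_of_val {j : Fin n} (hj : (j : ℕ) = 0) : j = e0 h := Fin.ext hj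
lemma eq_e1_of_val {j : Fin n} (hj : (j : ℕ) = 1) : j = e1 h := Fin.ext hj
lemma eq_e2_of_val {j : Fin n} (hj : (j : ℕ) = 2) : j = e2 h := Fin.ext hj

lemma two_le_of_ne {j : Fin n} (h0 : j ≠ e0 h) (h1 : j ≠ e1 h) : 2 ≤ (j : ℕ) := by
  by_contra hc
  push_neg at hc
  have : (j : ℕ) = 0 ∨ (j : ℕ) = 1 := by omega
  rcases this with hj | hj
  · exact h0 (eq_e0_of_val hj)
  · exact h1 (eq_e1_of_val hj)

lemma three_le_of_ne {j : Fin n} (h0 : j ≠ e0 h) (h1 : j ≠ e1 h) (h2 : j ≠ e2 h) :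
    3 ≤ (j : ℕ) := by
  by_contra hc
  push_neg at hc
  have : (j : ℕ) = 0 ∨ (j : ℕ) = 1 ∨ (j : ℕ) = 2 := by omega
  rcases this with hj | hj | hj
  · exact h0 (eq_e0_of_val hj)
  · exact h1 (eq_e1_of_val hj)
  · exact h2 (eq_e2_of_val hj)

/-! ### basic facts about Good matrices -/

section GoodFacts

variable {t : ℤ} {X : Matrix (Fin n) (Fin n) ℤ}

lemma row0_eq (hG : Good n t X) : X (e0 h) (e0 h) + X (e0 h) (e1 h) = t := by
  have hs := hG.2.1 (e0 h)
  rw [sum_eq_pair e0_ne_e1 (fun j hj0 hj1 => hG.2.2.2 (e0 h) j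
    (by simpa using two_le_of_ne hj0 hj1))] at hs
  exact hs

lemma row1_eq (hG : Good n t X) :
    X (e1 h) (e0 h) + (X (e1 h) (e1 h) + X (e1 h) (e2 h)) = t := by
  have hs := hG.2.1 (e1 h)
  rw [sum_eq_triple e0_ne_e1 e0_ne_e2 e1_ne_e2 (fun j hj0 hj1 hj2 => hG.2.2.2 (e1 h) j
    (by simpa using three_le_of_ne hj0 hj1 hj2))] at hs
  exact hs

lemma col_bound (hG : Good n t X) (j : Fin n) : X (e0 h) j + X (e1 h) j ≤ t := by
  have := pair_le_sum (f := fun i => X i j) (e0_ne_e1 (h := h)) (fun i => hG.1 i j)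
  rw [hG.2.2.1 j] at this
  exact this

lemma entry_le (hG : Good n t X) (i j : Fin n) : X i j ≤ t := by
  have := Finset.single_le_sum (f := fun j' => X i j') (fun j' _ => hG.1 i j')
    (Finset.mem_univ j)
  rw [hG.2.1 i] at this
  exact this

end GoodFacts

/-! ### circuit vectors -/

def vv (h : 2 < n) : Fin n → ℤ := fun k => if k = e0 h then 1 else if k = e1 h then -1 else 0
def ww (h : 2 < n) : Fin n → ℤ := fun k => if k = e0 h then 1 else if k = e2 h then -1 else 0

@[simp] lemma vv_e0 : vv h (e0 h) = 1 := by simp [vv]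
@[simp] lemma vv_e1 : vv h (e1 h) = -1 := by simp [vv]
@[simp] lemma vv_e2 : vv h (e2 h) = 0 := by simp [vv]
lemma vv_other {k : Fin n} (h0 : k ≠ e0 h) (h1 : k ≠ e1 h) : vv h k = 0 := by
  simp [vv, h0, h1]
@[simp] lemma ww_e0 : ww h (e0 h) = 1 := by simp [ww]
@[simp] lemma ww_e1 : ww h (e1 h) = 0 := by simp [ww]
@[simp] lemma ww_e2 : ww h (e2 h) = -1 := by simp [ww]
lemma ww_other {k : Fin n} (h0 : k ≠ e0 h) (h2 : k ≠ e2 h) : ww h k = 0 := by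
  simp [ww, h0, h2]

lemma vv_sum : ∑ k, vv h k = 0 := by
  rw [sum_eq_pair (e0_ne_e1 (h := h)) (fun j hj0 hj1 => vv_other hj0 hj1)]
  simp

lemma ww_sum : ∑ k, ww h k = 0 := by
  rw [sum_eq_pair (e0_ne_e2 (h := h)) (fun j hj0 hj2 => ww_other hj0 hj2)]
  simp

lemma vv_zero_of_supp {i j : Fin n} (hij : (i : ℕ) + 2 ≤ (j : ℕ)) : vv h j = 0 :=
  vv_other (fun e => by simp [e] at hij) (fun e => by simp [e] at hij)

/-! ### the fiber maps: up and down -/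

variable (h) in
/-- add `s` times the circuit `E00 + E11 - E01 - E10`. -/
def upM (X : Matrix (Fin n) (Fin n) ℤ) (s : ℤ) : Matrix (Fin n) (Fin n) ℤ :=
  fun i j => X i j + s * (vv h i * vv h j)

lemma upM_rowsum {t : ℤ} {X : Matrix (Fin n) (Fin n) ℤ} (hr : ∀ i, ∑ j, X i j = t)
    (s : ℤ) (i : Fin n) : ∑ j, upM h X s i j = t := by
  unfold upM
  rw [Finset.sum_add_distrib, hr i]
  have : ∀ j, s * (vv h i * vv h j) = s * vv h i * vv h j := fun j => by ring
  simp only [this]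
  rw [← Finset.mul_sum, vv_sum, mul_zero, add_zero]

lemma upM_colsum {t : ℤ} {X : Matrix (Fin n) (Fin n) ℤ} (hc : ∀ j, ∑ i, X i j = t)
    (s : ℤ) (j : Fin n) : ∑ i, upM h X s i j = t := by
  unfold upM
  rw [Finset.sum_add_distrib, hc j]
  have : ∀ i, s * (vv h i * vv h j) = s * vv h j * vv h i := fun i => by ring
  simp only [this]
  rw [← Finset.mul_sum, vv_sum, mul_zero, add_zero]

lemma upM_supp {X : Matrix (Fin n) (Fin n) ℤ}
    (hs : ∀ i j : Fin n, (i : ℕ) + 2 ≤ (j : ℕ) → X i j = 0) (s : ℤ) :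
    ∀ i j : Fin n, (i : ℕ) + 2 ≤ (j : ℕ) → upM h X s i j = 0 := by
  intro i j hij
  unfold upM
  rw [hs i j hij, vv_zero_of_supp hij, mul_zero, mul_zero, add_zero]

@[simp] lemma upM_00 {X : Matrix (Fin n) (Fin n) ℤ} (s : ℤ) :
    upM h X s (e0 h) (e0 h) = X (e0 h) (e0 h) + s := by simp [upM]
@[simp] lemma upM_01 {X : Matrix (Fin n) (Fin n) ℤ} (s : ℤ) :
    upM h X s (e0 h) (e1 h) = X (e0 h) (e1 h) - s := by simp [upM]; ring
@[simp] lemma upM_10 {X : Matrix (Fin n) (Fin n) ℤ} (s : ℤ) :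
    upM h X s (e1 h) (e0 h) = X (e1 h) (e0 h) - s := by simp [upM]; ring
@[simp] lemma upM_11 {X : Matrix (Fin n) (Fin n) ℤ} (s : ℤ) :
    upM h X s (e1 h) (e1 h) = X (e1 h) (e1 h) + s := by simp [upM]
lemma upM_other {X : Matrix (Fin n) (Fin n) ℤ} (s : ℤ) {i j : Fin n}
    (hij : i ≠ e0 h ∧ i ≠ e1 h ∨ j ≠ e0 h ∧ j ≠ e1 h) : upM h X s i j = X i j := by
  unfold upM
  rcases hij with ⟨h0, h1⟩ | ⟨h0, h1⟩
  · rw [vv_other h0 h1]; ring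
  · rw [vv_other h0 h1]; ring

lemma upM_upM {X : Matrix (Fin n) (Fin n) ℤ} (s s' : ℤ) :
    upM h (upM h X s) s' = upM h X (s + s') := by
  funext i j
  unfold upM
  ring

@[simp] lemma upM_zero {X : Matrix (Fin n) (Fin n) ℤ} : upM h X 0 = X := by
  funext i j
  unfold upM
  ring

/-- going up from a face element stays Good. -/
lemma upM_good {t : ℤ} {Y : Matrix (Fin n) (Fin n) ℤ} (hG : Good n t Y)
    (hface : Y (e1 h) (e1 h) = 0) {s : ℤ} (hs0 : 0 ≤ s) (hs1 : s ≤ Y (e1 h) (e0 h)) :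
    Good n t (upM h Y s) := by
  obtain ⟨hpos, hrow, hcol, hsupp⟩ := hG
  refine ⟨?_, upM_rowsum hrow s, upM_colsum hcol s, upM_supp hsupp s⟩
  intro i j
  rcases eq_or_ne i (e0 h) with rfl | hi0
  · rcases eq_or_ne j (e0 h) with rfl | hj0
    · rw [upM_00]; have := hpos (e0 h) (e0 h); linarith
    · rcases eq_or_ne j (e1 h) with rfl | hj1
      · rw [upM_01]
        -- need Y01 ≥ s ; Y01 ≥ Y10 since Y00 + Y10 ≤ t and Y00 + Y01 = t
        have hb := col_bound (h := h) ⟨hpos, hrow, hcol, hsupp⟩ (e0 h)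
        have hr0 := row0_eq (h := h) ⟨hpos, hrow, hcol, hsupp⟩
        linarith
      · rw [upM_other s (Or.inr ⟨hj0, hj1⟩)]; exact hpos _ _
  · rcases eq_or_ne i (e1 h) with rfl | hi1
    · rcases eq_or_ne j (e0 h) with rfl | hj0
      · rw [upM_10]; linarith
      · rcases eq_or_ne j (e1 h) with rfl | hj1
        · rw [upM_11, hface]; linarith
        · rw [upM_other s (Or.inr ⟨hj0, hj1⟩)]; exact hpos _ _
    · rw [upM_other s (Or.inl ⟨hi0, hi1⟩)]; exact hpos _ _

/-- going down from a Good element lands on the face. -/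
lemma downM_good {t : ℤ} {X : Matrix (Fin n) (Fin n) ℤ} (hG : Good n t X) :
    Good n t (upM h X (-(X (e1 h) (e1 h)))) ∧
      upM h X (-(X (e1 h) (e1 h))) (e1 h) (e1 h) = 0 := by
  obtain ⟨hpos, hrow, hcol, hsupp⟩ := hG
  set s := X (e1 h) (e1 h) with hs
  have hface : upM h X (-s) (e1 h) (e1 h) = 0 := by rw [upM_11]; ring
  refine ⟨⟨?_, upM_rowsum hrow _, upM_colsum hcol _, upM_supp hsupp _⟩, hface⟩
  intro i j
  have hspos : 0 ≤ s := hpos _ _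
  rcases eq_or_ne i (e0 h) with rfl | hi0
  · rcases eq_or_ne j (e0 h) with rfl | hj0
    · rw [upM_00]
      -- X00 - s ≥ 0 : X00 + X01 = t, X01 + X11 ≤ t
      have hb := col_bound (h := h) ⟨hpos, hrow, hcol, hsupp⟩ (e1 h)
      have hr0 := row0_eq (h := h) ⟨hpos, hrow, hcol, hsupp⟩
      linarith
    · rcases eq_or_ne j (e1 h) with rfl | hj1
      · rw [upM_01]; have := hpos (e0 h) (e1 h); linarith
      · rw [upM_other _ (Or.inr ⟨hj0, hj1⟩)]; exact hpos _ _
  · rcases eq_or_ne i (e1 h) with rfl | hi1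
    · rcases eq_or_ne j (e0 h) with rfl | hj0
      · rw [upM_10]; have := hpos (e1 h) (e0 h); linarith
      · rcases eq_or_ne j (e1 h) with rfl | hj1
        · rw [hface]
        · rw [upM_other _ (Or.inr ⟨hj0, hj1⟩)]; exact hpos _ _
    · rw [upM_other _ (Or.inl ⟨hi0, hi1⟩)]; exact hpos _ _

/-! ### the involution φ : swap rows 0,1 and columns 1,2 -/

variable (h) in
def phiM (X : Matrix (Fin n) (Fin n) ℤ) : Matrix (Fin n) (Fin n) ℤ :=
  fun i j => X (Equiv.swap (e0 h) (e1 h) i) (Equiv.swap (e1 h) (e2 h) j)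

lemma phiM_phiM (X : Matrix (Fin n) (Fin n) ℤ) : phiM h (phiM h X) = X := by
  funext i j
  simp [phiM, Equiv.swap_apply_self]

lemma phiM_10 (X : Matrix (Fin n) (Fin n) ℤ) :
    phiM h X (e1 h) (e0 h) = X (e0 h) (e0 h) := by
  unfold phiM
  rw [Equiv.swap_apply_right, Equiv.swap_apply_of_ne_of_ne e0_ne_e1 e0_ne_e2]

lemma phiM_good {t : ℤ} {X : Matrix (Fin n) (Fin n) ℤ} (hG : Good n t X)
    (hface : X (e1 h) (e1 h) = 0) :
    Good n t (phiM h X) ∧ phiM h X (e1 h) (e1 h) = 0 := by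
  obtain ⟨hpos, hrow, hcol, hsupp⟩ := hG
  constructor
  · refine ⟨fun i j => hpos _ _, ?_, ?_, ?_⟩
    · intro i
      unfold phiM
      exact (Equiv.sum_comp (Equiv.swap (e1 h) (e2 h))
        (fun j => X (Equiv.swap (e0 h) (e1 h) i) j)).trans (hrow _)
    · intro j
      unfold phiM
      exact (Equiv.sum_comp (Equiv.swap (e0 h) (e1 h))
        (fun i => X i (Equiv.swap (e1 h) (e2 h) j))).trans (hcol _)
    · intro i j hij
      unfold phiM
      rcases eq_or_ne i (e0 h) with rfl | hi0
      · -- i' = e1 ; j.val ≥ 2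
        rw [Equiv.swap_apply_left]
        rcases eq_or_ne j (e2 h) with rfl | hj2
        · rw [Equiv.swap_apply_right]; exact hface
        · have hj1 : j ≠ e1 h := fun e => by simp [e] at hij
          rw [Equiv.swap_apply_of_ne_of_ne hj1 hj2]
          refine hsupp _ _ ?_
          have := three_le_of_ne (h := h) (fun e => by simp [e] at hij) hj1 hj2
          simpa using this
      · rcases eq_or_ne i (e1 h) with rfl | hi1
        · -- i' = e0 ; j.val ≥ 3
          rw [Equiv.swap_apply_right]
          have hj1 : j ≠ e1 h := fun e => by simp [e] at hij
          have hj2 : j ≠ e2 h := fun e => by simp [e] at hij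
          rw [Equiv.swap_apply_of_ne_of_ne hj1 hj2]
          refine hsupp _ _ ?_
          simp only [e0_val]
          have : (2:ℕ) ≤ j := two_le_of_ne (h := h) (fun e => by simp [e] at hij) hj1
          have : (3:ℕ) ≤ j := three_le_of_ne (h := h) (fun e => by simp [e] at hij) hj1 hj2
          omega
        · -- i fixed, i.val ≥ 2, j.val ≥ 4
          rw [Equiv.swap_apply_of_ne_of_ne hi0 hi1]
          have hi2 : 2 ≤ (i : ℕ) := two_le_of_ne hi0 hi1
          have hj1 : j ≠ e1 h := fun e => by simp [e] at hij
          have hj2 : j ≠ e2 h := fun e => by simp [e] at hij; omega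
          rw [Equiv.swap_apply_of_ne_of_ne hj1 hj2]
          exact hsupp _ _ hij
  · unfold phiM
    rw [Equiv.swap_apply_right, Equiv.swap_apply_left]
    exact hsupp (e0 h) (e2 h) (by simp)

/-! ### the involution ψ : swap columns 0,2 plus circuit correction -/

variable (h) in
def psiM (X : Matrix (Fin n) (Fin n) ℤ) : Matrix (Fin n) (Fin n) ℤ :=
  fun i j => X i (Equiv.swap (e0 h) (e2 h) j) + X (e0 h) (e0 h) * (vv h i * ww h j)

lemma ww_swap (j : Fin n) : ww h (Equiv.swap (e0 h) (e2 h) j) = - ww h j := by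
  rcases eq_or_ne j (e0 h) with rfl | hj0
  · rw [Equiv.swap_apply_left]; simp
  · rcases eq_or_ne j (e2 h) with rfl | hj2
    · rw [Equiv.swap_apply_right]; simp
    · rw [Equiv.swap_apply_of_ne_of_ne hj0 hj2, ww_other hj0 hj2]; ring

lemma psiM_psiM {X : Matrix (Fin n) (Fin n) ℤ}
    (h02 : X (e0 h) (e2 h) = 0) : psiM h (psiM h X) = X := by
  have h00 : psiM h X (e0 h) (e0 h) = X (e0 h) (e0 h) := by
    unfold psiM
    rw [Equiv.swap_apply_left, h02]
    simp
  funext i j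
  conv_lhs => rw [psiM]
  rw [h00, psiM, Equiv.swap_apply_self, ww_swap]
  ring

lemma psiM_10 {X : Matrix (Fin n) (Fin n) ℤ} :
    psiM h X (e1 h) (e0 h) = X (e1 h) (e2 h) - X (e0 h) (e0 h) := by
  unfold psiM
  rw [Equiv.swap_apply_left]
  simp
  ring

lemma psiM_good {t : ℤ} {X : Matrix (Fin n) (Fin n) ℤ} (hG : Good n t X)
    (hface : X (e1 h) (e1 h) = 0) :
    Good n t (psiM h X) ∧ psiM h X (e1 h) (e1 h) = 0 := by
  obtain ⟨hpos, hrow, hcol, hsupp⟩ := hG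
  have h02 : X (e0 h) (e2 h) = 0 := hsupp _ _ (by simp)
  have hX12 : X (e0 h) (e0 h) ≤ X (e1 h) (e2 h) := by
    have hb := col_bound (h := h) ⟨hpos, hrow, hcol, hsupp⟩ (e0 h)
    have hr1 := row1_eq (h := h) ⟨hpos, hrow, hcol, hsupp⟩
    rw [hface] at hr1
    linarith
  constructor
  · refine ⟨?_, ?_, ?_, ?_⟩
    · -- nonneg
      intro i j
      unfold psiM
      rcases eq_or_ne i (e0 h) with rfl | hi0
      · rcases eq_or_ne j (e0 h) with rfl | hj0
        · rw [Equiv.swap_apply_left, h02]; simp; exact hpos _ _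
        · rcases eq_or_ne j (e2 h) with rfl | hj2
          · rw [Equiv.swap_apply_right]; simp
          · rw [ww_other hj0 hj2]; simpa using hpos _ _
      · rcases eq_or_ne i (e1 h) with rfl | hi1
        · rcases eq_or_ne j (e0 h) with rfl | hj0
          · rw [Equiv.swap_apply_left]; simp; linarith
          · rcases eq_or_ne j (e2 h) with rfl | hj2
            · rw [Equiv.swap_apply_right]; simp
              have := hpos (e1 h) (e0 h); have := hpos (e0 h) (e0 h); linarith
            · rw [ww_other hj0 hj2]; simpa using hpos _ _
        · rw [vv_other hi0 hi1]; simpa using hpos _ _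
    · -- row sums
      intro i
      unfold psiM
      rw [Finset.sum_add_distrib]
      rw [Equiv.sum_comp (Equiv.swap (e0 h) (e2 h)) (fun j => X i j), hrow i]
      have : ∀ j, X (e0 h) (e0 h) * (vv h i * ww h j)
          = X (e0 h) (e0 h) * vv h i * ww h j := fun j => by ring
      simp only [this]
      rw [← Finset.mul_sum, ww_sum, mul_zero, add_zero]
    · -- col sums
      intro j
      unfold psiM
      rw [Finset.sum_add_distrib, hcol _]
      have : ∀ i, X (e0 h) (e0 h) * (vv h i * ww h j)
          = X (e0 h) (e0 h) * ww h j * vv h i := fun i => by ring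
      simp only [this]
      rw [← Finset.mul_sum, vv_sum, mul_zero, add_zero]
    · -- support
      intro i j hij
      unfold psiM
      rcases eq_or_ne i (e0 h) with rfl | hi0
      · rcases eq_or_ne j (e2 h) with rfl | hj2
        · rw [Equiv.swap_apply_right]; simp
        · have hj0 : j ≠ e0 h := fun e => by simp [e] at hij
          rw [Equiv.swap_apply_of_ne_of_ne hj0 hj2, ww_other hj0 hj2,
            hsupp _ _ hij]
          ring
      · rcases eq_or_ne i (e1 h) with rfl | hi1
        · have hj0 : j ≠ e0 h := fun e => by simp [e] at hij
          have hj2 : j ≠ e2 h := fun e => by simp [e] at hij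
          rw [Equiv.swap_apply_of_ne_of_ne hj0 hj2, ww_other hj0 hj2,
            hsupp _ _ hij]
          ring
        · have h2i : 2 ≤ (i : ℕ) := two_le_of_ne hi0 hi1
          have hj0 : j ≠ e0 h := fun e => by simp [e] at hij
          have hj2 : j ≠ e2 h := fun e => by simp [e] at hij; omega
          rw [Equiv.swap_apply_of_ne_of_ne hj0 hj2, vv_other hi0 hi1,
            hsupp _ _ hij]
          ring
  · unfold psiM
    rw [Equiv.swap_apply_of_ne_of_ne e1_ne_e0 e1_ne_e2, hface]
    simp

/-! ### finiteness -/

lemma good_finite (t : ℕ) : Finite {X : Matrix (Fin n) (Fin n) ℤ // Good n (t : ℤ) X} := by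
  let F : {X : Matrix (Fin n) (Fin n) ℤ // Good n (t : ℤ) X} →
      (Fin n → Fin n → Fin (t + 1)) := fun X i j =>
    ⟨(X.1 i j).toNat, by
      have h1 : X.1 i j ≤ (t : ℤ) := entry_le X.2 i j
      have h2 : (0 : ℤ) ≤ X.1 i j := X.2.1 i j
      omega⟩
  refine Finite.of_injective F ?_
  intro X Y hXY
  apply Subtype.ext
  funext i j
  have := congrFun (congrFun hXY i) j
  simp only [F, Fin.mk.injEq] at this
  have hx : (0 : ℤ) ≤ X.1 i j := X.2.1 i j
  have hy : (0 : ℤ) ≤ Y.1 i j := Y.2.1 i j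
  omega

/-! ### the two involutions as equivalences of the face -/

variable (h) in
def phiE (t : ℤ) :
    {X : Matrix (Fin n) (Fin n) ℤ // Good n t X ∧ X (e1 h) (e1 h) = 0} ≃
      {X : Matrix (Fin n) (Fin n) ℤ // Good n t X ∧ X (e1 h) (e1 h) = 0} where
  toFun Y := ⟨phiM h Y.1, phiM_good Y.2.1 Y.2.2⟩
  invFun Y := ⟨phiM h Y.1, phiM_good Y.2.1 Y.2.2⟩
  left_inv Y := Subtype.ext (phiM_phiM _)
  right_inv Y := Subtype.ext (phiM_phiM _)

variable (h) in
def psiE (t : ℤ) :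
    {X : Matrix (Fin n) (Fin n) ℤ // Good n t X ∧ X (e1 h) (e1 h) = 0} ≃
      {X : Matrix (Fin n) (Fin n) ℤ // Good n t X ∧ X (e1 h) (e1 h) = 0} where
  toFun Y := ⟨psiM h Y.1, psiM_good Y.2.1 Y.2.2⟩
  invFun Y := ⟨psiM h Y.1, psiM_good Y.2.1 Y.2.2⟩
  left_inv Y := Subtype.ext (psiM_psiM (Y.2.1.2.2.2 _ _ (by simp)))
  right_inv Y := Subtype.ext (psiM_psiM (Y.2.1.2.2.2 _ _ (by simp)))

@[simp] lemma phiE_val (t : ℤ)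
    (Y : {X : Matrix (Fin n) (Fin n) ℤ // Good n t X ∧ X (e1 h) (e1 h) = 0}) :
    (phiE h t Y).1 = phiM h Y.1 := rfl

@[simp] lemma psiE_val (t : ℤ)
    (Y : {X : Matrix (Fin n) (Fin n) ℤ // Good n t X ∧ X (e1 h) (e1 h) = 0}) :
    (psiE h t Y).1 = psiM h Y.1 := rfl

lemma phiM_00 (X : Matrix (Fin n) (Fin n) ℤ) :
    phiM h X (e0 h) (e0 h) = X (e1 h) (e0 h) := by
  unfold phiM
  rw [Equiv.swap_apply_left, Equiv.swap_apply_of_ne_of_ne e0_ne_e1 e0_ne_e2]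

/-! ### the key counting identity -/

lemma key_count (h : 2 < n) (t : ℕ) :
    3 * Nat.card {X : Matrix (Fin n) (Fin n) ℤ // Good n (t : ℤ) X}
      = (t + 3) *
        Nat.card {X : Matrix (Fin n) (Fin n) ℤ //
          Good n (t : ℤ) X ∧ X (e1 h) (e1 h) = 0} := by
  classical
  set T := {X : Matrix (Fin n) (Fin n) ℤ // Good n (t : ℤ) X} with hT
  set T0 := {X : Matrix (Fin n) (Fin n) ℤ // Good n (t : ℤ) X ∧ X (e1 h) (e1 h) = 0}
    with hT0
  haveI : Finite T := good_finite t
  haveI : Finite T0 := by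
    refine Finite.of_injective (fun Y : T0 => (⟨Y.1, Y.2.1⟩ : T)) ?_
    intro a b hab
    rw [Subtype.mk.injEq] at hab
    exact Subtype.ext hab
  haveI := Fintype.ofFinite T
  haveI := Fintype.ofFinite T0
  rw [Nat.card_eq_fintype_card, Nat.card_eq_fintype_card]
  -- the projection to the face
  set f : T → T0 := fun X =>
    ⟨upM h X.1 (-(X.1 (e1 h) (e1 h))), (downM_good X.2).1, (downM_good X.2).2⟩
    with hf
  -- step 1 : card T = ∑_{Y : T0} (Y₁₀.toNat + 1)
  have step1 : Fintype.card T = ∑ Y : T0, ((Y.1 (e1 h) (e0 h)).toNat + 1) := by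
    rw [← Finset.card_univ,
      Finset.card_eq_sum_card_fiberwise (f := f) (t := Finset.univ)
        (fun x _ => Finset.mem_univ _)]
    refine Finset.sum_congr rfl (fun Y _ => ?_)
    rw [← Finset.card_range ((Y.1 (e1 h) (e0 h)).toNat + 1)]
    refine Finset.card_nbij' (fun X => (X.1 (e1 h) (e1 h)).toNat)
      (fun s => if hs : (s : ℤ) ≤ Y.1 (e1 h) (e0 h) then
          ⟨upM h Y.1 (s : ℤ), upM_good Y.2.1 Y.2.2 (Int.natCast_nonneg s) hs⟩
        else ⟨Y.1, Y.2.1⟩) ?_ ?_ ?_ ?_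
    · -- maps fiber into range
      intro X hX
      simp only [Finset.mem_coe, Finset.mem_filter, Finset.mem_univ, true_and, hf] at hX
      have hXv : upM h X.1 (-(X.1 (e1 h) (e1 h))) = Y.1 := congrArg Subtype.val hX
      have hY10 : upM h X.1 (-(X.1 (e1 h) (e1 h))) (e1 h) (e0 h)
          = Y.1 (e1 h) (e0 h) := by rw [hXv]
      rw [upM_10] at hY10
      have h1 : (0 : ℤ) ≤ X.1 (e1 h) (e1 h) := X.2.1 _ _
      have h2 : (0 : ℤ) ≤ X.1 (e1 h) (e0 h) := X.2.1 _ _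
      simp only [Finset.mem_coe, Finset.mem_range]
      omega
    · -- maps range into fiber
      intro s hs
      simp only [Finset.mem_coe, Finset.mem_range] at hs
      have hw : (0 : ℤ) ≤ Y.1 (e1 h) (e0 h) := Y.2.1.1 _ _
      have hsle : (s : ℤ) ≤ Y.1 (e1 h) (e0 h) := by omega
      simp only [dif_pos hsle, Finset.mem_coe, Finset.mem_filter, Finset.mem_univ, true_and, hf]
      have h11 : upM h Y.1 (s : ℤ) (e1 h) (e1 h) = (s : ℤ) := by
        rw [upM_11, Y.2.2, zero_add]
      apply Subtype.ext
      show upM h (upM h Y.1 (s : ℤ)) (-(upM h Y.1 (s : ℤ) (e1 h) (e1 h))) = Y.1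
      rw [h11, upM_upM]
      simp
    · -- left inverse
      intro X hX
      simp only [Finset.mem_coe, Finset.mem_filter, Finset.mem_univ, true_and, hf] at hX
      have hXv : upM h X.1 (-(X.1 (e1 h) (e1 h))) = Y.1 := congrArg Subtype.val hX
      have hY10 : upM h X.1 (-(X.1 (e1 h) (e1 h))) (e1 h) (e0 h)
          = Y.1 (e1 h) (e0 h) := by rw [hXv]
      rw [upM_10] at hY10
      have h1 : (0 : ℤ) ≤ X.1 (e1 h) (e1 h) := X.2.1 _ _
      have h2 : (0 : ℤ) ≤ X.1 (e1 h) (e0 h) := X.2.1 _ _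
      have hsle : ((X.1 (e1 h) (e1 h)).toNat : ℤ) ≤ Y.1 (e1 h) (e0 h) := by omega
      simp only [dif_pos hsle]
      apply Subtype.ext
      show upM h Y.1 ((X.1 (e1 h) (e1 h)).toNat : ℤ) = X.1
      rw [Int.toNat_of_nonneg h1, ← hXv, upM_upM]
      simp
    · -- right inverse
      intro s hs
      simp only [Finset.mem_coe, Finset.mem_range] at hs
      have hw : (0 : ℤ) ≤ Y.1 (e1 h) (e0 h) := Y.2.1.1 _ _
      have hsle : (s : ℤ) ≤ Y.1 (e1 h) (e0 h) := by omega
      simp only [dif_pos hsle]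
      show (upM h Y.1 (s : ℤ) (e1 h) (e1 h)).toNat = s
      rw [upM_11, Y.2.2, zero_add, Int.toNat_natCast]
  -- step 2 : sum identities via the involutions
  have sumphi : ∑ Y : T0, Y.1 (e1 h) (e0 h) = ∑ Y : T0, Y.1 (e0 h) (e0 h) := by
    refine Fintype.sum_equiv (phiE h t) _ _ (fun Y => ?_)
    rw [phiE_val, phiM_00]
  have sumpsi : ∑ Y : T0, Y.1 (e1 h) (e0 h)
      = ∑ Y : T0, (Y.1 (e1 h) (e2 h) - Y.1 (e0 h) (e0 h)) := by
    refine (Fintype.sum_equiv (psiE h t) _ _ (fun Y => ?_)).symm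
    rw [psiE_val, psiM_10]
  have rowid : ∀ Y : T0, Y.1 (e1 h) (e0 h) + Y.1 (e1 h) (e2 h) = (t : ℤ) := by
    intro Y
    have h1 := row1_eq (h := h) Y.2.1
    rw [Y.2.2, zero_add] at h1
    exact h1
  have sum3 : 3 * ∑ Y : T0, Y.1 (e1 h) (e0 h) = (t : ℤ) * Fintype.card T0 := by
    have h1 : ∑ Y : T0, (Y.1 (e1 h) (e0 h) + Y.1 (e0 h) (e0 h)
        + (Y.1 (e1 h) (e2 h) - Y.1 (e0 h) (e0 h))) = (t : ℤ) * Fintype.card T0 := by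
      rw [Finset.sum_congr rfl (fun Y _ => show _ = (t : ℤ) by linarith [rowid Y])]
      rw [Finset.sum_const, Finset.card_univ, nsmul_eq_mul, mul_comm]
    rw [Finset.sum_add_distrib, Finset.sum_add_distrib] at h1
    linarith [sumphi, sumpsi]
  -- put everything together over ℤ
  have hcast : (Fintype.card T : ℤ)
      = (∑ Y : T0, Y.1 (e1 h) (e0 h)) + Fintype.card T0 := by
    rw [step1]
    push_cast
    rw [Finset.sum_add_distrib]
    congr 1
    · exact Finset.sum_congr rfl fun Y _ => Int.toNat_of_nonneg (Y.2.1.1 _ _)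
    · simp [Finset.card_univ]
  have main : 3 * (Fintype.card T : ℤ) = ((t : ℤ) + 3) * Fintype.card T0 := by
    rw [hcast]
    linarith [sum3]
  exact_mod_cast main


/-! ### translation between `latCount` and `Good` -/

lemma smul_entry_eq {t : ℝ} {Y : Matrix (Fin n) (Fin n) ℝ} {X : Matrix (Fin n) (Fin n) ℤ}
    (hEq : t • Y = fun i j => (X i j : ℝ)) (i j : Fin n) :
    (X i j : ℝ) = t * Y i j := by
  have h2 : (fun i j => (X i j : ℝ)) i j = (t • Y) i j := by rw [hEq]
  simpa [Matrix.smul_apply] using h2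

lemma mem_smul_CRY_iff {t : ℕ} (ht : 1 ≤ t) (X : Matrix (Fin n) (Fin n) ℤ) :
    ((fun i j => (X i j : ℝ)) ∈ (t : ℝ) • CRY n) ↔ Good n (t : ℤ) X := by
  have htR : (t : ℝ) ≠ 0 := Nat.cast_ne_zero.mpr (by omega)
  constructor
  · rintro ⟨Y, hY, hEq⟩
    obtain ⟨hpos, hrow, hcol, hsupp⟩ := hY
    have hent := smul_entry_eq hEq
    refine ⟨?_, ?_, ?_, ?_⟩
    · intro i j
      have h0 : (0 : ℝ) ≤ (X i j : ℝ) := by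
        rw [hent i j]
        exact mul_nonneg (by positivity) (hpos i j)
      exact_mod_cast h0
    · intro i
      have hsum : ((∑ j, X i j : ℤ) : ℝ) = ((t : ℤ) : ℝ) := by
        push_cast
        rw [Finset.sum_congr rfl (fun j _ => hent i j), ← Finset.mul_sum, hrow i,
          mul_one]
      exact_mod_cast hsum
    · intro j
      have hsum : ((∑ i, X i j : ℤ) : ℝ) = ((t : ℤ) : ℝ) := by
        push_cast
        rw [Finset.sum_congr rfl (fun i _ => hent i j), ← Finset.mul_sum, hcol j,
          mul_one]
      exact_mod_cast hsum
    · intro i j hij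
      have h0 : (X i j : ℝ) = 0 := by rw [hent i j, hsupp i j hij, mul_zero]
      exact_mod_cast h0
  · rintro ⟨hpos, hrow, hcol, hsupp⟩
    refine ⟨fun i j => (X i j : ℝ) / t, ⟨?_, ?_, ?_, ?_⟩, ?_⟩
    · intro i j
      apply div_nonneg _ (by positivity)
      exact_mod_cast hpos i j
    · intro i
      rw [← Finset.sum_div]
      have hsum : (∑ j, ((X i j : ℤ) : ℝ)) = (t : ℝ) := by
        exact_mod_cast congrArg (fun z : ℤ => (z : ℝ)) (hrow i)
      rw [hsum, div_self htR]
    · intro j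
      rw [← Finset.sum_div]
      have hsum : (∑ i, ((X i j : ℤ) : ℝ)) = (t : ℝ) := by
        exact_mod_cast congrArg (fun z : ℤ => (z : ℝ)) (hcol j)
      rw [hsum, div_self htR]
    · intro i j hij
      show ((X i j : ℤ) : ℝ) / t = 0
      rw [hsupp i j hij]
      simp
    · funext i j
      show (t : ℝ) * (((X i j : ℤ) : ℝ) / t) = ((X i j : ℤ) : ℝ)
      field_simp

lemma mem_smul_CRYface_iff {t : ℕ} (ht : 1 ≤ t) (h2n : 2 ≤ n)
    (X : Matrix (Fin n) (Fin n) ℤ) :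
    ((fun i j => (X i j : ℝ)) ∈ (t : ℝ) • CRYface n h2n) ↔
      (Good n (t : ℤ) X ∧ X ⟨1, h2n⟩ ⟨1, h2n⟩ = 0) := by
  have htR : (t : ℝ) ≠ 0 := Nat.cast_ne_zero.mpr (by omega)
  constructor
  · rintro ⟨Y, ⟨hY, hY11⟩, hEq⟩
    refine ⟨(mem_smul_CRY_iff ht X).mp ⟨Y, hY, hEq⟩, ?_⟩
    have hent := smul_entry_eq hEq ⟨1, h2n⟩ ⟨1, h2n⟩
    rw [hY11, mul_zero] at hent
    exact_mod_cast hent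
  · rintro ⟨hG, h11⟩
    obtain ⟨Y, hY, hEq⟩ := (mem_smul_CRY_iff ht X).mpr hG
    refine ⟨Y, ⟨hY, ?_⟩, hEq⟩
    have hent := smul_entry_eq hEq ⟨1, h2n⟩ ⟨1, h2n⟩
    rw [h11] at hent
    have : (t : ℝ) * Y ⟨1, h2n⟩ ⟨1, h2n⟩ = 0 := by exact_mod_cast hent.symm
    rcases mul_eq_zero.mp this with h' | h'
    · exact absurd h' htR
    · exact h'

lemma latCount_identity (hn : 3 ≤ n) (h2n : 2 ≤ n) (t : ℕ) (ht : 1 ≤ t) :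
    3 * latCount n (CRY n) t = (t + 3) * latCount n (CRYface n h2n) t := by
  have h : 2 < n := by omega
  unfold latCount
  rw [Nat.card_congr (Equiv.subtypeEquivRight fun X => mem_smul_CRY_iff ht X),
    Nat.card_congr (Equiv.subtypeEquivRight fun X => mem_smul_CRYface_iff ht h2n X),
    key_count h t]
  rfl

end Stmt7

/-- Conjecture 4 of Chan–Robbins–Yuen: with `d = n(n-1)/2`, writing `L₁`
for the relative volume of the face `F = {X ∈ CRY_n : x₂₂ = 0}` and `L₂` for the relative
volume of `CRY_n` (both as Ehrhart limits), one has `binom(n,2)·L₁ = 3·L₂`. -/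
theorem stmt7 (n : ℕ) (hn : 3 ≤ n) (L1 L2 : ℝ)
    (h1 : Filter.Tendsto
      (fun t : ℕ => (((n*(n-1)/2 - 1).factorial *
          latCount n (CRYface n (by omega)) t : ℕ) : ℝ) / (t : ℝ) ^ (n*(n-1)/2 - 1))
      Filter.atTop (nhds L1))
    (h2 : Filter.Tendsto
      (fun t : ℕ => (((n*(n-1)/2).factorial * latCount n (CRY n) t : ℕ) : ℝ) /
          (t : ℝ) ^ (n*(n-1)/2))
      Filter.atTop (nhds L2)) :
    (n.choose 2 : ℝ) * L1 = 3 * L2 := by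
  have h2n : 2 ≤ n := by omega
  set d := n * (n - 1) / 2 with hd
  have hd3 : 3 ≤ d := by
    have h6 : 3 * 2 ≤ n * (n - 1) := Nat.mul_le_mul hn (by omega)
    omega
  have hfac : (d.factorial : ℝ) = (d : ℝ) * ((d - 1).factorial : ℝ) := by
    exact_mod_cast congrArg (fun k : ℕ => (k : ℝ)) (Nat.mul_factorial_pred (by omega)).symm
  -- the quotient (t+3)/t tends to 1
  have hquot : Filter.Tendsto (fun t : ℕ => ((t : ℝ) + 3) / (t : ℝ))
      Filter.atTop (nhds 1) := by
    have h0 : Filter.Tendsto (fun t : ℕ => 1 + 3 / (t : ℝ)) Filter.atTop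
        (nhds (1 + 0)) :=
      tendsto_const_nhds.add (tendsto_const_div_atTop_nhds_zero_nat 3)
    rw [add_zero] at h0
    refine h0.congr' ?_
    filter_upwards [Filter.eventually_ge_atTop 1] with t ht
    have htR : (t : ℝ) ≠ 0 := Nat.cast_ne_zero.mpr (by omega)
    field_simp
  -- eventual identity between the two Ehrhart quotients
  have heq : (fun t : ℕ => (((d - 1).factorial *
          latCount n (CRYface n (by omega : 2 ≤ n)) t : ℕ) : ℝ) / (t : ℝ) ^ (d - 1))
        =ᶠ[Filter.atTop]
      (fun t : ℕ => (3 / (d : ℝ)) * ((t : ℝ) / ((t : ℝ) + 3)) *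
        (((d.factorial * latCount n (CRY n) t : ℕ) : ℝ) / (t : ℝ) ^ d)) := by
    filter_upwards [Filter.eventually_ge_atTop 1] with t ht
    have hk := Stmt7.latCount_identity (n := n) hn (by omega) t ht
    have hcast : 3 * ((latCount n (CRY n) t : ℝ))
        = ((t : ℝ) + 3) * ((latCount n (CRYface n (by omega : 2 ≤ n)) t : ℝ)) := by
      exact_mod_cast hk
    have htR : (t : ℝ) ≠ 0 := Nat.cast_ne_zero.mpr (by omega)
    have ht3 : (t : ℝ) + 3 ≠ 0 := by positivity
    have hdR : (d : ℝ) ≠ 0 := Nat.cast_ne_zero.mpr (by omega)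
    have hpow : (t : ℝ) ^ d = (t : ℝ) ^ (d - 1) * (t : ℝ) := by
      rw [← pow_succ]
      congr 1
      omega
    have hpowne : (t : ℝ) ^ (d - 1) ≠ 0 := pow_ne_zero _ htR
    push_cast
    rw [hpow, hfac]
    field_simp
    linear_combination (-1 : ℝ) * hcast
  -- conclude via uniqueness of limits
  have hlim : Filter.Tendsto
      (fun t : ℕ => (3 / (d : ℝ)) * ((t : ℝ) / ((t : ℝ) + 3)) *
        (((d.factorial * latCount n (CRY n) t : ℕ) : ℝ) / (t : ℝ) ^ d))
      Filter.atTop (nhds ((3 / (d : ℝ)) * 1 * L2)) := by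
    have hquot' : Filter.Tendsto (fun t : ℕ => (t : ℝ) / ((t : ℝ) + 3))
        Filter.atTop (nhds 1) := by
      have h1' : Filter.Tendsto (fun t : ℕ => (((t : ℝ) + 3) / (t : ℝ))⁻¹)
          Filter.atTop (nhds 1⁻¹) := hquot.inv₀ one_ne_zero
      rw [inv_one] at h1'
      exact h1'.congr (fun t => by rw [inv_div])
    exact (tendsto_const_nhds.mul hquot').mul h2
  have hL1 : L1 = (3 / (d : ℝ)) * 1 * L2 :=
    tendsto_nhds_unique (h1.congr' heq) hlim
  have hch : (n.choose 2 : ℝ) = (d : ℝ) := by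
    exact_mod_cast congrArg (fun k : ℕ => (k : ℝ)) (Nat.choose_two_right n)
  have hdR : (d : ℝ) ≠ 0 := Nat.cast_ne_zero.mpr (by omega)
  rw [hL1, hch]
  field_simp
end
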